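/- Let ν be a nonzero real number, c, b₁, b₂ real numbers, and k a nonzero complex number. Set L̂ = c + b₁·X + i·b₂·k - ν·(X² - k²) ∈ ℂ[X] and let Â_Oseen be the 3×3 matrix over ℂ[X] given by Â_Oseen = [[L̂, 0, -X], [0, L̂, -i·k], [X, i·k, 0]]. Then there exist 3×3 matrices E and F with entries in ℂ[X] such that det(E) = 1, det(F) = 1, and Â_Oseen = E·D·F, where D is the diagonal matrix D = diag(1, 1, L̂·(X² - k²)). -/
import Mathlib


open Polynomial

/-- Smith factorization of the 2D Oseen symbol: `Â_Oseen = E * D * F` with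
`det E = det F = 1` and `D = diag(1, 1, L̂ (X² - k²))`, where
`L̂ = c + b₁ X + i b₂ k - ν (X² - k²)` is the convection–diffusion symbol. -/
theorem smith_factorization_oseen_2d (ν : ℝ) (hν : ν ≠ 0) (c b₁ b₂ : ℝ)
    (k : ℂ) (hk : k ≠ 0) :
    let L : Polynomial ℂ :=
      C (c : ℂ) + C (b₁ : ℂ) * X + C (Complex.I * (b₂ : ℂ) * k)
        - C (ν : ℂ) * (X ^ 2 - C k ^ 2)
    ∃ E F : Matrix (Fin 3) (Fin 3) (Polynomial ℂ),
      E.det = 1 ∧ F.det = 1 ∧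
      (!![L, 0,                  -X;
          0, L,                  -C (Complex.I * k);
          X, C (Complex.I * k),  0] :
        Matrix (Fin 3) (Fin 3) (Polynomial ℂ))
        = E * Matrix.diagonal ![1, 1, L * (X ^ 2 - C k ^ 2)] * F := by
  intro L
  obtain ⟨a, ha⟩ : ∃ a : ℂ, a = Complex.I * k := ⟨_, rfl⟩
  obtain ⟨w, hw⟩ : ∃ w : ℂ, a * w = 1 :=
    ⟨a⁻¹, mul_inv_cancel₀ (by simp [ha, hk, Complex.I_ne_zero])⟩
  have hC : (C a : Polynomial ℂ) * C w = 1 := by rw [← C_mul, hw, C_1]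
  have hak : (C a : Polynomial ℂ) ^ 2 = -(C k) ^ 2 := by
    rw [← C_pow, ← C_pow, ← C_neg, ha]
    congr 1
    rw [mul_pow, Complex.I_sq]; ring
  have hD : (Matrix.diagonal ![1, 1, L * (X ^ 2 - C k ^ 2)] :
      Matrix (Fin 3) (Fin 3) (Polynomial ℂ))
      = !![1, 0, 0; 0, 1, 0; 0, 0, L * (X ^ 2 - C k ^ 2)] := by
    ext i j
    fin_cases i <;> fin_cases j <;>
      simp [Matrix.diagonal, Matrix.vecHead, Matrix.vecTail]
  refine ⟨!![0, -X, C w ^ 2; L, -C a, 0; C a, 0, 0],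
    !![C w * X, 1, 0; C w ^ 2 * (L * X), 0, 1; 1, 0, 0], ?_, ?_, ?_⟩
  · simp [Matrix.det_fin_three, Matrix.vecHead, Matrix.vecTail]
    linear_combination (C a * C w + 1) * hC
  · simp [Matrix.det_fin_three, Matrix.vecHead, Matrix.vecTail]
  · rw [hD, Matrix.mul_fin_three, Matrix.mul_fin_three, ← ha]
    refine Matrix.ext fun i j => ?_
    fin_cases i <;> fin_cases j <;>
      simp [Matrix.vecHead, Matrix.vecTail]
    all_goals
      first
        | ring1
        | linear_combination (C w ^ 2 * L) * hak - (C a * C w + 1) * L * hC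
        | linear_combination (L * C w * X) * hC
        | linear_combination (-(L * C w * X)) * hC
        | linear_combination (-X) * hC
        | linear_combination X * hC
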